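/- Any group G which is finitely generated and satisfies g³ = 1 for every g ∈ G is finite (restricted Burnside / Burnside theorem for exponent 3). -/
import Mathlib

section Burnside3
open scoped Pointwise

variable {G : Type*} [Group G]

private lemma burn3_key (h3 : ∀ g : G, g ^ 3 = 1) (a b : G) :
    a * b * a = b⁻¹ * a⁻¹ * b⁻¹ := by
  have hcube : (a * b) * (a * b) * (a * b) = 1 := by
    have h := h3 (a * b); rwa [pow_succ, pow_succ, pow_one] at h
  have h : (a * b * a) * (b * a * b) = 1 := by rw [← hcube]; group
  rw [eq_inv_of_mul_eq_one_left h]; group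

/-- Adjoining one exponent-3 element to a finite subgroup keeps the closure finite. -/
private lemma burn3_insert (h3 : ∀ g : G, g ^ 3 = 1) (x : G) (H : Subgroup G)
    (hH : (H : Set G).Finite) :
    ((Subgroup.closure (insert x (H : Set G)) : Subgroup G) : Set G).Finite := by
  have K1 := burn3_key h3
  have hx3 : x * x * x = 1 := by
    have h := h3 x; rwa [pow_succ, pow_succ, pow_one] at h
  have hxx : x * x = x⁻¹ := by rw [eq_inv_iff_mul_eq_one]; exact hx3
  have hii : x⁻¹ * x⁻¹ = x := by
    have h := congrArg (fun y => y⁻¹) hxx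
    simpa [mul_inv_rev] using h
  have K2 : ∀ c : G, x⁻¹ * c * x = x * c⁻¹ * x⁻¹ * c⁻¹ := by
    intro c
    calc x⁻¹ * c * x = x⁻¹ * x⁻¹ * (x * c * x) := by group
    _ = x⁻¹ * x⁻¹ * (c⁻¹ * x⁻¹ * c⁻¹) := by rw [K1]
    _ = x * (c⁻¹ * x⁻¹ * c⁻¹) := by rw [hii]
    _ = x * c⁻¹ * x⁻¹ * c⁻¹ := by group
  have F2 : ∀ a b : G, a * x * b * x = a * b⁻¹ * x⁻¹ * b⁻¹ := by
    intro a b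
    calc a * x * b * x = a * (x * b * x) := by group
    _ = a * (b⁻¹ * x⁻¹ * b⁻¹) := by rw [K1]
    _ = a * b⁻¹ * x⁻¹ * b⁻¹ := by group
  have F3 : ∀ a b : G, a * x⁻¹ * b * x = a * x * b⁻¹ * x⁻¹ * b⁻¹ := by
    intro a b
    calc a * x⁻¹ * b * x = a * (x⁻¹ * b * x) := by group
    _ = a * (x * b⁻¹ * x⁻¹ * b⁻¹) := by rw [K2]
    _ = a * x * b⁻¹ * x⁻¹ * b⁻¹ := by group
  have F4 : ∀ a b c : G,
      a * x * b * x⁻¹ * c * x = (a * b⁻¹ * (c * b)) * x * (c * b * c⁻¹) := by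
    intro a b c
    calc a * x * b * x⁻¹ * c * x = a * x * b * (x⁻¹ * c * x) := by group
    _ = a * x * b * (x * c⁻¹ * x⁻¹ * c⁻¹) := by rw [K2]
    _ = a * (x * b * x) * c⁻¹ * x⁻¹ * c⁻¹ := by group
    _ = a * (b⁻¹ * x⁻¹ * b⁻¹) * c⁻¹ * x⁻¹ * c⁻¹ := by rw [K1]
    _ = a * b⁻¹ * (x⁻¹ * (b⁻¹ * c⁻¹) * x⁻¹) * c⁻¹ := by group
    _ = a * b⁻¹ * ((b⁻¹ * c⁻¹)⁻¹ * x⁻¹⁻¹ * (b⁻¹ * c⁻¹)⁻¹) * c⁻¹ := by rw [K1]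
    _ = (a * b⁻¹ * (c * b)) * x * (c * b * c⁻¹) := by group
  -- the covering set
  set S : Set G := {g | ∃ a ∈ H, ∃ b ∈ H, ∃ c ∈ H,
      g = a ∨ g = a * x * b ∨ g = a * x⁻¹ * b ∨ g = a * x * b * x⁻¹ * c} with hS
  have mem1 : ∀ a ∈ H, a ∈ S := fun a ha =>
    ⟨a, ha, 1, H.one_mem, 1, H.one_mem, Or.inl rfl⟩
  have mulH : ∀ g ∈ S, ∀ h ∈ H, g * h ∈ S := by
    rintro g ⟨a, ha, b, hb, c, hc, rfl | rfl | rfl | rfl⟩ h hh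
    · exact ⟨g * h, H.mul_mem ha hh, 1, H.one_mem, 1, H.one_mem, Or.inl rfl⟩
    · exact ⟨a, ha, b * h, H.mul_mem hb hh, 1, H.one_mem,
        Or.inr (Or.inl (by group))⟩
    · exact ⟨a, ha, b * h, H.mul_mem hb hh, 1, H.one_mem,
        Or.inr (Or.inr (Or.inl (by group)))⟩
    · exact ⟨a, ha, b, hb, c * h, H.mul_mem hc hh,
        Or.inr (Or.inr (Or.inr (by group)))⟩
  have mulx : ∀ g ∈ S, g * x ∈ S := by
    rintro g ⟨a, ha, b, hb, c, hc, rfl | rfl | rfl | rfl⟩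
    · exact ⟨g, ha, 1, H.one_mem, 1, H.one_mem, Or.inr (Or.inl (by group))⟩
    · exact ⟨a * b⁻¹, H.mul_mem ha (H.inv_mem hb), b⁻¹, H.inv_mem hb, 1, H.one_mem,
        Or.inr (Or.inr (Or.inl (F2 a b)))⟩
    · exact ⟨a, ha, b⁻¹, H.inv_mem hb, b⁻¹, H.inv_mem hb,
        Or.inr (Or.inr (Or.inr (F3 a b)))⟩
    · exact ⟨a * b⁻¹ * (c * b), H.mul_mem (H.mul_mem ha (H.inv_mem hb)) (H.mul_mem hc hb),
        c * b * c⁻¹, H.mul_mem (H.mul_mem hc hb) (H.inv_mem hc), 1, H.one_mem,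
        Or.inr (Or.inl (F4 a b c))⟩
  have mulxi : ∀ g ∈ S, g * x⁻¹ ∈ S := by
    intro g hg
    have h : g * x⁻¹ = g * x * x := by rw [← hxx]; group
    rw [h]; exact mulx _ (mulx _ hg)
  have Sinv : ∀ g ∈ S, g⁻¹ ∈ S := by
    rintro g ⟨a, ha, b, hb, c, hc, rfl | rfl | rfl | rfl⟩
    · exact ⟨g⁻¹, H.inv_mem ha, 1, H.one_mem, 1, H.one_mem, Or.inl rfl⟩
    · exact ⟨b⁻¹, H.inv_mem hb, a⁻¹, H.inv_mem ha, 1, H.one_mem,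
        Or.inr (Or.inr (Or.inl (by group)))⟩
    · exact ⟨b⁻¹, H.inv_mem hb, a⁻¹, H.inv_mem ha, 1, H.one_mem,
        Or.inr (Or.inl (by group))⟩
    · exact ⟨c⁻¹, H.inv_mem hc, b⁻¹, H.inv_mem hb, a⁻¹, H.inv_mem ha,
        Or.inr (Or.inr (Or.inr (by group)))⟩
  have Smul : ∀ g ∈ S, ∀ g' ∈ S, g * g' ∈ S := by
    intro g hg g' hg'
    obtain ⟨a, ha, b, hb, c, hc, rfl | rfl | rfl | rfl⟩ := hg'
    · exact mulH _ hg g' ha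
    · have h : g * (a * x * b) = g * a * x * b := by group
      rw [h]; exact mulH _ (mulx _ (mulH _ hg a ha)) b hb
    · have h : g * (a * x⁻¹ * b) = g * a * x⁻¹ * b := by group
      rw [h]; exact mulH _ (mulxi _ (mulH _ hg a ha)) b hb
    · have h : g * (a * x * b * x⁻¹ * c) = g * a * x * b * x⁻¹ * c := by group
      rw [h]
      exact mulH _ (mulxi _ (mulH _ (mulx _ (mulH _ hg a ha)) b hb)) c hc
  have Sone : (1 : G) ∈ S := mem1 1 H.one_mem
  let K : Subgroup G :=
    { carrier := S
      one_mem' := Sone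
      mul_mem' := fun {p q} hp hq => Smul p hp q hq
      inv_mem' := fun {p} hp => Sinv p hp }
  have hle : Subgroup.closure (insert x (H : Set G)) ≤ K := by
    rw [Subgroup.closure_le]
    rintro y (rfl | hy)
    · exact ⟨1, H.one_mem, 1, H.one_mem, 1, H.one_mem, Or.inr (Or.inl (by group))⟩
    · exact mem1 y hy
  -- S is finite
  set U : Set G := (H : Set G) ∪ {x, x⁻¹} with hU
  have hUfin : U.Finite := hH.union ((Set.finite_singleton x⁻¹).insert x)
  have hU1 : (1 : G) ∈ U := Set.mem_union_left _ H.one_mem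
  have hUx : x ∈ U := Set.mem_union_right _ (Set.mem_insert _ _)
  have hUxi : x⁻¹ ∈ U := Set.mem_union_right _ (Set.mem_insert_of_mem _ rfl)
  have hSsub : S ⊆ U * U * U * U * U := by
    rintro g ⟨a, ha, b, hb, c, hc, rfl | rfl | rfl | rfl⟩
    · have h : g = g * 1 * 1 * 1 * 1 := by group
      rw [h]
      exact Set.mul_mem_mul (Set.mul_mem_mul (Set.mul_mem_mul
        (Set.mul_mem_mul ((Set.mem_union_left _ ha)) hU1) hU1) hU1) hU1
    · have h : a * x * b = a * x * b * 1 * 1 := by group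
      rw [h]
      exact Set.mul_mem_mul (Set.mul_mem_mul (Set.mul_mem_mul
        (Set.mul_mem_mul ((Set.mem_union_left _ ha)) hUx) (Set.mem_union_left _ hb)) hU1) hU1
    · have h : a * x⁻¹ * b = a * x⁻¹ * b * 1 * 1 := by group
      rw [h]
      exact Set.mul_mem_mul (Set.mul_mem_mul (Set.mul_mem_mul
        (Set.mul_mem_mul ((Set.mem_union_left _ ha)) hUxi) (Set.mem_union_left _ hb)) hU1) hU1
    · exact Set.mul_mem_mul (Set.mul_mem_mul (Set.mul_mem_mul
        (Set.mul_mem_mul ((Set.mem_union_left _ ha)) hUx) (Set.mem_union_left _ hb)) hUxi) (Set.mem_union_left _ hc)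
  have hfin5 : (U * U * U * U * U).Finite :=
    (((hUfin.mul hUfin).mul hUfin).mul hUfin).mul hUfin
  exact hfin5.subset (fun g hg => hSsub (hle hg))

private lemma burn3_finset (h3 : ∀ g : G, g ^ 3 = 1) (s : Finset G) :
    ((Subgroup.closure (s : Set G) : Subgroup G) : Set G).Finite := by
  classical
  induction s using Finset.induction_on with
  | empty =>
      simp only [Finset.coe_empty, Subgroup.closure_empty]
      exact Set.finite_singleton 1
  | @insert x s hx ih =>
      have hmono : Subgroup.closure ((insert x s : Finset G) : Set G) ≤
          Subgroup.closure (insert x ((Subgroup.closure (s : Set G) : Subgroup G) : Set G)) := by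
        apply Subgroup.closure_mono
        rw [Finset.coe_insert]
        exact Set.insert_subset_insert Subgroup.subset_closure
      exact (burn3_insert h3 x _ ih).subset hmono
end Burnside3

/-- Burnside, exponent 3: any finitely generated group in which
every element satisfies `g^3 = 1` is finite. -/
theorem stmt5 (G : Type*) [Group G] (hfg : Group.FG G)
    (h3 : ∀ g : G, g ^ 3 = 1) : Finite G := by
  classical
  obtain ⟨S, htop, hfin⟩ := Group.fg_iff.mp hfg
  have h := burn3_finset h3 hfin.toFinset
  rw [hfin.coe_toFinset, htop] at h
  rw [← Set.finite_univ_iff]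
  simpa using h
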